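/- With P₁, P₂, Ψ symmetric positive definite, K₁ = P₁(Ψ + P₁ + P₂)^{-1}, and x̂₁ = x̃₁ + K₁(x̃₂ - x̃₁), x̂₂ = x̃₂ + K₂(x̃₁ - x̃₂) with K₂ = P₂(Ψ + P₁ + P₂)^{-1}, the vector (x̂₁, x̂₂) solves the linear system (HᵀWH)x = HᵀWz, where H = [[I,0],[0,I],[I,-I]], W = diag(P₁^{-1}, P₂^{-1}, Ψ^{-1}), and z = (x̃₁, x̃₂, 0). -/

import Mathlib

open Matrix

theorem two_robot_fusion_solves_normal_equations
    {n : ℕ} (P₁ P₂ Ψ : Matrix (Fin n) (Fin n) ℝ)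
    (hP₁ : P₁.PosDef) (hP₂ : P₂.PosDef) (hΨ : Ψ.PosDef)
    (xt1 xt2 : Fin n → ℝ)
    (K₁ K₂ : Matrix (Fin n) (Fin n) ℝ)
    (hK₁ : K₁ = P₁ * (Ψ + P₁ + P₂)⁻¹)
    (hK₂ : K₂ = P₂ * (Ψ + P₁ + P₂)⁻¹)
    (H : Matrix ((Fin n ⊕ Fin n) ⊕ Fin n) (Fin n ⊕ Fin n) ℝ)
    (hH : H = Matrix.fromRows (1 : Matrix (Fin n ⊕ Fin n) (Fin n ⊕ Fin n) ℝ)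
                (Matrix.fromCols (1 : Matrix (Fin n) (Fin n) ℝ)
                  (-(1 : Matrix (Fin n) (Fin n) ℝ))))
    (W : Matrix ((Fin n ⊕ Fin n) ⊕ Fin n) ((Fin n ⊕ Fin n) ⊕ Fin n) ℝ)
    (hW : W = Matrix.fromBlocks (Matrix.fromBlocks P₁⁻¹ 0 0 P₂⁻¹) 0 0 Ψ⁻¹)
    (z : ((Fin n ⊕ Fin n) ⊕ Fin n) → ℝ)
    (hz : z = Sum.elim (Sum.elim xt1 xt2) 0)
    (xh : (Fin n ⊕ Fin n) → ℝ)
    (hxh : xh = Sum.elim (xt1 + K₁ *ᵥ (xt2 - xt1)) (xt2 + K₂ *ᵥ (xt1 - xt2))) :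
    (Hᵀ * W * H) *ᵥ xh = (Hᵀ * W) *ᵥ z := by
  have hSdet : IsUnit (Ψ + P₁ + P₂).det :=
    (Matrix.isUnit_iff_isUnit_det _).1 ((hΨ.add hP₁).add hP₂).isUnit
  have h1 : P₁⁻¹ * K₁ = (Ψ + P₁ + P₂)⁻¹ := by
    rw [hK₁, ← Matrix.mul_assoc, Matrix.nonsing_inv_mul _
      ((Matrix.isUnit_iff_isUnit_det _).1 hP₁.isUnit), Matrix.one_mul]
  have h2 : P₂⁻¹ * K₂ = (Ψ + P₁ + P₂)⁻¹ := by
    rw [hK₂, ← Matrix.mul_assoc, Matrix.nonsing_inv_mul _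
      ((Matrix.isUnit_iff_isUnit_det _).1 hP₂.isUnit), Matrix.one_mul]
  have h3 : Ψ⁻¹ * (1 - K₁ - K₂) = (Ψ + P₁ + P₂)⁻¹ := by
    have : (1 : Matrix (Fin n) (Fin n) ℝ) - K₁ - K₂ = Ψ * (Ψ + P₁ + P₂)⁻¹ := by
      rw [hK₁, hK₂, ← Matrix.mul_nonsing_inv _ hSdet]
      rw [← Matrix.sub_mul, ← Matrix.sub_mul]
      congr 1
      abel
    rw [this, ← Matrix.mul_assoc, Matrix.nonsing_inv_mul _
      ((Matrix.isUnit_iff_isUnit_det _).1 hΨ.isUnit), Matrix.one_mul]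
  subst hH hW hz hxh
  rw [← Matrix.mulVec_mulVec, ← Matrix.mulVec_mulVec, ← Matrix.mulVec_mulVec]
  simp [Matrix.transpose_fromRows, Matrix.transpose_fromCols, Matrix.fromBlocks_mulVec,
    Matrix.fromCols_mulVec_sumElim, Matrix.fromRows_mulVec]
  have key : Ψ⁻¹ *ᵥ (xt1 + K₁ *ᵥ (xt2 - xt1) + (-1 : Matrix (Fin n) (Fin n) ℝ) *ᵥ (xt2 + K₂ *ᵥ (xt1 - xt2)))
      = (Ψ + P₁ + P₂)⁻¹ *ᵥ (xt1 - xt2) := by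
    have hv : xt1 + K₁ *ᵥ (xt2 - xt1) + (-1 : Matrix (Fin n) (Fin n) ℝ) *ᵥ (xt2 + K₂ *ᵥ (xt1 - xt2))
        = (1 - K₁ - K₂) *ᵥ (xt1 - xt2) := by
      simp only [Matrix.neg_mulVec, Matrix.one_mulVec, Matrix.sub_mulVec, Matrix.mulVec_sub,
        Matrix.mulVec_add]
      abel
    rw [hv, Matrix.mulVec_mulVec, h3]
  have k1 : P₁⁻¹ *ᵥ (xt1 + K₁ *ᵥ (xt2 - xt1))
      = P₁⁻¹ *ᵥ xt1 + (Ψ + P₁ + P₂)⁻¹ *ᵥ (xt2 - xt1) := by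
    rw [Matrix.mulVec_add, Matrix.mulVec_mulVec, h1]
  have k2 : P₂⁻¹ *ᵥ (xt2 + K₂ *ᵥ (xt1 - xt2))
      = P₂⁻¹ *ᵥ xt2 + (Ψ + P₁ + P₂)⁻¹ *ᵥ (xt1 - xt2) := by
    rw [Matrix.mulVec_add, Matrix.mulVec_mulVec, h2]
  have hneg : (Ψ + P₁ + P₂)⁻¹ *ᵥ (xt2 - xt1) = -((Ψ + P₁ + P₂)⁻¹ *ᵥ (xt1 - xt2)) := by
    rw [← Matrix.mulVec_neg, neg_sub]
  have comb : ∀ (a b c d : Fin n → ℝ),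
      (Sum.elim a b + Sum.elim c d : Fin n ⊕ Fin n → ℝ) = Sum.elim (a + c) (b + d) := by
    intro a b c d; funext i; cases i <;> rfl
  have e1 : P₁⁻¹ *ᵥ (xt1 + K₁ *ᵥ (xt2 - xt1)) +
      Ψ⁻¹ *ᵥ (xt1 + K₁ *ᵥ (xt2 - xt1) + (-1 : Matrix (Fin n) (Fin n) ℝ) *ᵥ (xt2 + K₂ *ᵥ (xt1 - xt2)))
      = P₁⁻¹ *ᵥ xt1 := by
    rw [k1, key, hneg]; abel
  have e2 : P₂⁻¹ *ᵥ (xt2 + K₂ *ᵥ (xt1 - xt2)) +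
      (-Ψ⁻¹) *ᵥ (xt1 + K₁ *ᵥ (xt2 - xt1) + (-1 : Matrix (Fin n) (Fin n) ℝ) *ᵥ (xt2 + K₂ *ᵥ (xt1 - xt2)))
      = P₂⁻¹ *ᵥ xt2 := by
    rw [k2, Matrix.neg_mulVec, key]; abel
  rw [comb, e1, e2]
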